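/- Let 2 ≤ q < ∞, let n ≥ 1, and let M be either ℝ³ or the closure of a bounded open subset of ℝ³, equipped with Lebesgue measure. Let u ∈ L^q(M; Matrix_{n×n}(ℂ)) and let ε > 0. Then there exists δ > 0, depending on ε and u, such that for every measurable function g : M → U(n) (the group of n×n unitary matrices), if ‖g - I‖_{L²(M)} < δ then ‖g u g^{-1} - u‖_{L^q(M)} < ε, where (g u g^{-1})(x) = g(x) u(x) g(x)^{-1}. -/

import Mathlib

open MeasureTheory

attribute [local instance] Matrix.frobeniusSeminormedAddCommGroup
  Matrix.frobeniusNormedAddCommGroup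

attribute [local instance] Matrix.frobeniusNormedRing

namespace AdjHelp

variable {n : ℕ}

lemma unitary_norm_le (hn : 1 ≤ n) {g : Matrix (Fin n) (Fin n) ℂ}
    (hg : g ∈ Matrix.unitaryGroup (Fin n) ℂ) : ‖g‖ ≤ (n : ℝ) := by
  have h1 : star g * g = 1 := (Matrix.mem_unitaryGroup_iff'.mp hg)
  have hcol : ∀ j, ∑ i, ‖g i j‖ ^ (2 : ℕ) = 1 := by
    intro j
    have h0 := congrArg (fun m => m j j) h1
    simp only [Matrix.mul_apply, Matrix.one_apply_eq, Matrix.star_apply] at h0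
    have h2 : ∀ i, (star (g i j) * g i j : ℂ) = ((‖g i j‖ ^ (2:ℕ) : ℝ) : ℂ) := by
      intro i
      rw [Complex.star_def, Complex.conj_mul']
      norm_num
    rw [Finset.sum_congr rfl (fun i _ => h2 i), ← Complex.ofReal_sum] at h0
    exact_mod_cast h0
  have hnorm : ‖g‖ = (n : ℝ) ^ (1/2 : ℝ) := by
    rw [Matrix.frobenius_norm_def, Finset.sum_comm]
    have habs : ∀ j : Fin n, ∑ i, ‖g i j‖ ^ (2:ℕ) = 1 := by
      intro j
      rw [← hcol j]
    simp [habs]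
  rw [hnorm]
  calc (n:ℝ) ^ (1/2:ℝ) ≤ (n:ℝ) ^ (1:ℝ) := by
        apply Real.rpow_le_rpow_of_exponent_le (by exact_mod_cast hn); norm_num
    _ = n := Real.rpow_one _

end AdjHelp

namespace AdjHelp2
open AdjHelp

variable {n : ℕ}

lemma unitary_inv_eq_star {g : Matrix (Fin n) (Fin n) ℂ}
    (hg : g ∈ Matrix.unitaryGroup (Fin n) ℂ) : g⁻¹ = star g :=
  Matrix.inv_eq_left_inv (Matrix.mem_unitaryGroup_iff'.mp hg)

lemma conj_bound_small (hn : 1 ≤ n) {g a : Matrix (Fin n) (Fin n) ℂ} {C : ℝ}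
    (hg : g ∈ Matrix.unitaryGroup (Fin n) ℂ) (ha : ‖a‖ ≤ C) :
    ‖g * a * star g - a‖ ≤ 2 * n * C * ‖g - 1‖ := by
  have hC : (0:ℝ) ≤ C := le_trans (norm_nonneg _) ha
  have hsg : ‖star g‖ ≤ (n:ℝ) := by
    rw [Matrix.star_eq_conjTranspose, Matrix.frobenius_norm_conjTranspose]
    exact unitary_norm_le hn hg
  have key : g * a * star g - a = ((g - 1) * a - a * (g - 1)) * star g := by
    have h : g * star g = 1 := Matrix.mem_unitaryGroup_iff.mp hg
    have : ((g - 1) * a - a * (g - 1)) * star g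
        = g * a * star g - a * (g * star g) := by noncomm_ring
    rw [this, h, mul_one]
  rw [key]
  calc ‖((g - 1) * a - a * (g - 1)) * star g‖
      ≤ ‖(g - 1) * a - a * (g - 1)‖ * ‖star g‖ := Matrix.frobenius_norm_mul _ _
    _ ≤ (‖(g-1) * a‖ + ‖a * (g-1)‖) * (n:ℝ) := by
        apply mul_le_mul (norm_sub_le _ _) hsg (norm_nonneg _)
        positivity
    _ ≤ (‖g-1‖ * C + C * ‖g-1‖) * (n:ℝ) := by
        gcongr
        · exact le_trans (Matrix.frobenius_norm_mul _ _) (by gcongr)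
        · exact le_trans (Matrix.frobenius_norm_mul _ _) (by gcongr)
    _ = 2 * n * C * ‖g - 1‖ := by ring

lemma conj_bound_big (hn : 1 ≤ n) {g : Matrix (Fin n) (Fin n) ℂ}
    (b : Matrix (Fin n) (Fin n) ℂ)
    (hg : g ∈ Matrix.unitaryGroup (Fin n) ℂ) :
    ‖g * b * star g - b‖ ≤ ((n:ℝ) * n + 1) * ‖b‖ := by
  have hgn : ‖g‖ ≤ (n:ℝ) := unitary_norm_le hn hg
  have hsg : ‖star g‖ ≤ (n:ℝ) := by
    rw [Matrix.star_eq_conjTranspose, Matrix.frobenius_norm_conjTranspose]; exact hgn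
  calc ‖g * b * star g - b‖ ≤ ‖g * b * star g‖ + ‖b‖ := norm_sub_le _ _
    _ ≤ ‖g * b‖ * ‖star g‖ + ‖b‖ := by gcongr; exact Matrix.frobenius_norm_mul _ _
    _ ≤ (‖g‖ * ‖b‖) * ‖star g‖ + ‖b‖ := by
        gcongr; exacts [Matrix.frobenius_norm_mul _ _]
    _ ≤ ((n:ℝ) * ‖b‖) * (n:ℝ) + ‖b‖ := by gcongr
    _ = ((n:ℝ) * n + 1) * ‖b‖ := by ring

lemma norm_sub_one_le (hn : 1 ≤ n) {g : Matrix (Fin n) (Fin n) ℂ}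
    (hg : g ∈ Matrix.unitaryGroup (Fin n) ℂ) : ‖g - 1‖ ≤ 2 * n := by
  have h1 : ‖(1 : Matrix (Fin n) (Fin n) ℂ)‖ ≤ (n:ℝ) :=
    unitary_norm_le hn (one_mem _)
  calc ‖g - 1‖ ≤ ‖g‖ + ‖(1 : Matrix (Fin n) (Fin n) ℂ)‖ := norm_sub_le _ _
    _ ≤ (n:ℝ) + n := add_le_add (unitary_norm_le hn hg) h1
    _ = 2 * n := by ring

end AdjHelp2

namespace AdjHelp3
open ENNReal

lemma interp {α : Type*} [MeasurableSpace α] {μ : Measure α} {E : Type*}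
    [NormedAddCommGroup E] {f : α → E} {K : ℝ} (hb : ∀ x, ‖f x‖ ≤ K)
    {q : ℝ} (hq : 2 ≤ q) :
    eLpNorm f (ENNReal.ofReal q) μ ≤
      (ENNReal.ofReal K ^ (q - 2) * eLpNorm f 2 μ ^ (2:ℝ)) ^ (1/q) := by
  have hq0 : (0:ℝ) < q := by linarith
  have hp0 : ENNReal.ofReal q ≠ 0 := by
    simp [ENNReal.ofReal_eq_zero]; linarith
  have hptop : ENNReal.ofReal q ≠ ∞ := ENNReal.ofReal_ne_top
  have htr : (ENNReal.ofReal q).toReal = q := ENNReal.toReal_ofReal hq0.le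
  have h2 : eLpNorm f 2 μ ^ (2:ℝ) = ∫⁻ x, (‖f x‖₊ : ℝ≥0∞) ^ (2:ℝ) ∂μ := by
    rw [eLpNorm_eq_lintegral_rpow_enorm_toReal (by norm_num) (by norm_num),
      ← ENNReal.rpow_mul]
    norm_num [ENNReal.rpow_one]
    rfl
  rw [eLpNorm_eq_lintegral_rpow_enorm_toReal hp0 hptop, htr, h2]
  apply ENNReal.rpow_le_rpow _ (by positivity)
  calc ∫⁻ x, (‖f x‖₊ : ℝ≥0∞) ^ q ∂μ
      ≤ ∫⁻ x, ENNReal.ofReal K ^ (q-2) * (‖f x‖₊ : ℝ≥0∞) ^ (2:ℝ) ∂μ := by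
        apply lintegral_mono
        intro x
        dsimp only
        have hsplit : (‖f x‖₊ : ℝ≥0∞) ^ q
            = (‖f x‖₊ : ℝ≥0∞) ^ (q-2) * (‖f x‖₊ : ℝ≥0∞) ^ (2:ℝ) := by
          rw [← ENNReal.rpow_add_of_nonneg _ _ (by linarith) (by norm_num)]
          norm_num
        rw [hsplit]
        gcongr
        · change ‖f x‖ₑ ≤ _
          rw [← ofReal_norm_eq_enorm]
          exact ENNReal.ofReal_le_ofReal (hb x)
    _ = ENNReal.ofReal K ^ (q-2) * ∫⁻ x, (‖f x‖₊ : ℝ≥0∞) ^ (2:ℝ) ∂μ :=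
        lintegral_const_mul' _ _ (by
          exact ENNReal.rpow_ne_top_of_nonneg (by linarith) ENNReal.ofReal_ne_top)

end AdjHelp3

namespace AdjHelp4
open ENNReal Filter Topology

lemma trunc {α E : Type*} [MeasurableSpace α] [NormedAddCommGroup E] {μ : Measure α}
    {u : α → E} (hum : StronglyMeasurable u) {q : ℝ} (hq : 2 ≤ q)
    (hu : MemLp u (ENNReal.ofReal q) μ) {η : ℝ≥0∞} (hη : 0 < η) (hηtop : η ≠ ⊤) :
    ∃ C : ℝ, 1 ≤ C ∧
      eLpNorm ({x | C < ‖u x‖}.indicator u) (ENNReal.ofReal q) μ < η := by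
  have hq0 : (0:ℝ) < q := by linarith
  have hp0 : ENNReal.ofReal q ≠ 0 := by simp [ENNReal.ofReal_eq_zero]; linarith
  have hptop : ENNReal.ofReal q ≠ ∞ := ENNReal.ofReal_ne_top
  have htr : (ENNReal.ofReal q).toReal = q := ENNReal.toReal_ofReal hq0.le
  set φ : α → ℝ≥0∞ := fun x => (‖u x‖₊ : ℝ≥0∞) ^ q with hφdef
  have hφ : Measurable φ := hum.enorm.pow_const _
  have hfin : ∫⁻ x, φ x ∂μ ≠ ⊤ := by
    have h := hu.2
    rw [eLpNorm_eq_lintegral_rpow_enorm_toReal hp0 hptop, htr] at h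
    change (∫⁻ x, φ x ∂μ) ^ (1/q) < ⊤ at h
    intro hcon
    rw [hcon, ENNReal.top_rpow_of_pos (by positivity : (0:ℝ) < 1/q)] at h
    exact lt_irrefl _ h
  have hs : ∀ k : ℕ, MeasurableSet {x | (k:ℝ) < ‖u x‖} :=
    fun k => measurableSet_lt measurable_const hum.norm.measurable
  have htend : Tendsto (fun k : ℕ => ∫⁻ x, {x | (k:ℝ) < ‖u x‖}.indicator φ x ∂μ)
      atTop (𝓝 0) := by
    have h0 : (0:ℝ≥0∞) = ∫⁻ _x, (0:ℝ≥0∞) ∂μ := by simp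
    rw [h0]
    refine tendsto_lintegral_of_dominated_convergence φ
      (fun k => hφ.indicator (hs k)) (fun k => ae_of_all _ fun x => ?_) hfin
      (ae_of_all _ fun x => ?_)
    · exact Set.indicator_le_self _ _ x
    · apply tendsto_const_nhds.congr'
      filter_upwards [eventually_ge_atTop ⌈‖u x‖⌉₊] with k hk
      have : ¬ ((k:ℝ) < ‖u x‖) := by
        push_neg
        exact le_trans (Nat.le_ceil _) (by exact_mod_cast hk)
      simp [Set.indicator_of_notMem, this]
  have hpos : (0:ℝ≥0∞) < η ^ q := ENNReal.rpow_pos hη hηtop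
  have hev := (htend.eventually_lt_const hpos).and (eventually_ge_atTop 1)
  obtain ⟨k, hk1, hk2⟩ := hev.exists
  refine ⟨(k:ℝ), by exact_mod_cast hk2, ?_⟩
  rw [eLpNorm_eq_lintegral_rpow_enorm_toReal hp0 hptop, htr]
  have heq : ∀ x, (‖({x | (k:ℝ) < ‖u x‖}.indicator u) x‖₊ : ℝ≥0∞) ^ q
      = {x | (k:ℝ) < ‖u x‖}.indicator φ x := by
    intro x
    by_cases hx : x ∈ {x | (k:ℝ) < ‖u x‖}
    · simp [Set.indicator_of_mem hx, hφdef]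
    · simp [Set.indicator_of_notMem hx, ENNReal.zero_rpow_of_pos hq0]
  calc (∫⁻ x, (‖({x | (k:ℝ) < ‖u x‖}.indicator u) x‖₊ : ℝ≥0∞) ^ q ∂μ) ^ (1/q)
      = (∫⁻ x, {x | (k:ℝ) < ‖u x‖}.indicator φ x ∂μ) ^ (1/q) := by
        congr 1; exact lintegral_congr heq
    _ < (η ^ q) ^ (1/q) := ENNReal.rpow_lt_rpow hk1 (by positivity)
    _ = η := by
        rw [← ENNReal.rpow_mul, mul_one_div_cancel hq0.ne', ENNReal.rpow_one]

end AdjHelp4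


/-- Lemma 7.13(a): strong continuity of the adjoint action.  For `M ⊆ ℝ³` either all of
`ℝ³` or the closure of a bounded open set, `2 ≤ q < ∞`, `u ∈ L^q(M; Matrix_{n×n}(ℂ))`
(Frobenius norm) and `ε > 0`, there is `δ > 0` (depending on `ε` and `u`) such that for
every measurable `g : M → U(n)`, if `‖g - I‖_{L²(M)} < δ` then
`‖g u g⁻¹ - u‖_{L^q(M)} < ε`. -/
theorem adjoint_action_strong_continuity
    (n : ℕ) (hn : 1 ≤ n) (q : ℝ) (hq : 2 ≤ q)
    (M : Set (EuclideanSpace ℝ (Fin 3)))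
    (hM : M = Set.univ ∨
      ∃ U : Set (EuclideanSpace ℝ (Fin 3)), IsOpen U ∧ Bornology.IsBounded U ∧ M = closure U)
    (u : EuclideanSpace ℝ (Fin 3) → Matrix (Fin n) (Fin n) ℂ)
    (hu : MemLp u (ENNReal.ofReal q) (volume.restrict M))
    (ε : ℝ) (hε : 0 < ε) :
    ∃ δ : ℝ, 0 < δ ∧ ∀ g : EuclideanSpace ℝ (Fin 3) → Matrix (Fin n) (Fin n) ℂ,
      AEStronglyMeasurable g (volume.restrict M) → (∀ x, g x ∈ Matrix.unitaryGroup (Fin n) ℂ) →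
      eLpNorm (fun x => g x - 1) 2 (volume.restrict M) < ENNReal.ofReal δ →
      eLpNorm (fun x => g x * u x * (g x)⁻¹ - u x) (ENNReal.ofReal q) (volume.restrict M) <
        ENNReal.ofReal ε := by
  classical
  set μ := volume.restrict M with hμdef
  have hq0 : (0:ℝ) < q := by linarith
  have hn0 : (0:ℝ) < n := by exact_mod_cast hn
  have hp1 : (1:ENNReal) ≤ ENNReal.ofReal q := by
    rw [← ENNReal.ofReal_one]; exact ENNReal.ofReal_le_ofReal (by linarith)
  obtain ⟨u', hu'sm, huu'⟩ := hu.aestronglyMeasurable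
  have hu' : MemLp u' (ENNReal.ofReal q) μ := (memLp_congr_ae huu').mp hu
  set D : ℝ := (n:ℝ) * n + 1 with hDdef
  have hD : 0 < D := by positivity
  set η : ENNReal := ENNReal.ofReal (ε / (2 * D)) with hηdef
  have hη : 0 < η := ENNReal.ofReal_pos.mpr (by positivity)
  obtain ⟨C, hC1, hCsmall⟩ := AdjHelp4.trunc hu'sm hq hu' hη ENNReal.ofReal_ne_top
  have hC0 : (0:ℝ) < C := lt_of_lt_of_le one_pos hC1
  set s : Set (EuclideanSpace ℝ (Fin 3)) := {x | C < ‖u' x‖} with hsdef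
  have hsm : MeasurableSet s := measurableSet_lt measurable_const hu'sm.norm.measurable
  set u₂ := s.indicator u' with hu₂def
  set u₁ := sᶜ.indicator u' with hu₁def
  have hdecomp : ∀ x, u' x = u₁ x + u₂ x := by
    intro x
    have h := congrFun (Set.indicator_self_add_compl s u') x
    rw [← h]; simp only [Pi.add_apply, hu₁def, hu₂def]; exact add_comm _ _
  have hu₁b : ∀ x, ‖u₁ x‖ ≤ C := by
    intro x
    by_cases hx : x ∈ sᶜ
    · rw [hu₁def, Set.indicator_of_mem hx]
      have h2 : ¬ (C < ‖u' x‖) := hx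
      linarith [not_lt.mp h2]
    · rw [hu₁def, Set.indicator_of_notMem hx]
      simpa using hC0.le
  have hu₁sm : StronglyMeasurable u₁ := hu'sm.indicator hsm.compl
  have hu₂sm : StronglyMeasurable u₂ := hu'sm.indicator hsm
  set A : ℝ := 2 * n * C with hAdef
  have hA : 0 < A := by positivity
  set Kr : ℝ := 2 * n with hKrdef
  have hKr : 0 < Kr := by positivity
  set r : ℝ := ((ε/2) / A) ^ q / Kr ^ (q - 2) with hrdef
  have hr : 0 < r := by positivity
  refine ⟨Real.sqrt r, Real.sqrt_pos.mpr hr, ?_⟩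
  have hδ0 : 0 < Real.sqrt r := Real.sqrt_pos.mpr hr
  set δ : ℝ := Real.sqrt r with hδdef
  have hRI : A * (Kr ^ (q - 2) * δ ^ (2:ℝ)) ^ (1/q) = ε / 2 := by
    have h1 : δ ^ (2:ℝ) = r := by
      rw [Real.rpow_two, hδdef, Real.sq_sqrt hr.le]
    rw [h1, hrdef, mul_div_cancel₀ _ (ne_of_gt (Real.rpow_pos_of_pos hKr _)),
      ← Real.rpow_mul (by positivity), mul_one_div_cancel hq0.ne', Real.rpow_one,
      mul_div_cancel₀ _ hA.ne']
  intro g hgm hgu hgδ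
  have hsg : AEStronglyMeasurable (fun x => star (g x)) μ :=
    continuous_star.comp_aestronglyMeasurable hgm
  have hae : (fun x => g x * u x * (g x)⁻¹ - u x)
      =ᵐ[μ] fun x => (g x * u₁ x * star (g x) - u₁ x)
        + (g x * u₂ x * star (g x) - u₂ x) := by
    filter_upwards [huu'] with x hx
    rw [hx, AdjHelp2.unitary_inv_eq_star (hgu x), hdecomp x]
    noncomm_ring
  rw [eLpNorm_congr_ae hae]
  have hP1m : AEStronglyMeasurable
      (fun x => g x * u₁ x * star (g x) - u₁ x) μ :=
    ((hgm.mul hu₁sm.aestronglyMeasurable).mul hsg).sub hu₁sm.aestronglyMeasurable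
  have hP2m : AEStronglyMeasurable
      (fun x => g x * u₂ x * star (g x) - u₂ x) μ :=
    ((hgm.mul hu₂sm.aestronglyMeasurable).mul hsg).sub hu₂sm.aestronglyMeasurable
  letI : ESeminormedAddMonoid (Matrix (Fin n) (Fin n) ℂ) :=
    NormedAddCommGroup.toENormedAddCommMonoid.toESeminormedAddMonoid
  have htri := eLpNorm_add_le hP1m hP2m hp1
  have hP1 : eLpNorm (fun x => g x * u₁ x * star (g x) - u₁ x) (ENNReal.ofReal q) μ
      ≤ ENNReal.ofReal (ε/2) := by
    have step1 : eLpNorm (fun x => g x * u₁ x * star (g x) - u₁ x) (ENNReal.ofReal q) μ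
        ≤ eLpNorm (fun x => A * ‖g x - 1‖) (ENNReal.ofReal q) μ :=
      eLpNorm_mono_real fun x => by
        rw [hAdef, hKrdef]; exact AdjHelp2.conj_bound_small hn (hgu x) (hu₁b x)
    have step3 : eLpNorm (fun x => A * ‖g x - 1‖) (ENNReal.ofReal q) μ
        = ENNReal.ofReal A * eLpNorm (fun x => g x - 1) (ENNReal.ofReal q) μ := by
      rw [show (fun x : EuclideanSpace ℝ (Fin 3) => A * ‖g x - 1‖)
          = A • (fun x => ‖g x - 1‖) from rfl, eLpNorm_const_smul,
        Real.enorm_eq_ofReal hA.le, eLpNorm_norm]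
    have step4 := AdjHelp3.interp (μ := μ) (f := fun x => g x - 1) (K := Kr)
      (fun x => by rw [hKrdef]; exact AdjHelp2.norm_sub_one_le hn (hgu x)) hq
    have step5 : (ENNReal.ofReal Kr ^ (q-2) * eLpNorm (fun x => g x - 1) 2 μ ^ (2:ℝ)) ^ (1/q)
        ≤ (ENNReal.ofReal Kr ^ (q-2) * ENNReal.ofReal δ ^ (2:ℝ)) ^ (1/q) := by
      gcongr
    have step6 : ENNReal.ofReal A * (ENNReal.ofReal Kr ^ (q-2)
          * ENNReal.ofReal δ ^ (2:ℝ)) ^ (1/q) = ENNReal.ofReal (ε/2) := by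
      rw [ENNReal.ofReal_rpow_of_nonneg hKr.le (by linarith),
        ENNReal.ofReal_rpow_of_nonneg hδ0.le (by norm_num),
        ← ENNReal.ofReal_mul (by positivity),
        ENNReal.ofReal_rpow_of_nonneg (by positivity) (by positivity),
        ← ENNReal.ofReal_mul hA.le, hRI]
    calc eLpNorm (fun x => g x * u₁ x * star (g x) - u₁ x) (ENNReal.ofReal q) μ
        ≤ eLpNorm (fun x => A * ‖g x - 1‖) (ENNReal.ofReal q) μ := step1
      _ = ENNReal.ofReal A * eLpNorm (fun x => g x - 1) (ENNReal.ofReal q) μ := step3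
      _ ≤ ENNReal.ofReal A * (ENNReal.ofReal Kr ^ (q-2)
            * ENNReal.ofReal δ ^ (2:ℝ)) ^ (1/q) :=
          mul_le_mul_right (step4.trans step5) _
      _ = ENNReal.ofReal (ε/2) := step6
  have hP2 : eLpNorm (fun x => g x * u₂ x * star (g x) - u₂ x) (ENNReal.ofReal q) μ
      < ENNReal.ofReal (ε/2) := by
    have step1 : eLpNorm (fun x => g x * u₂ x * star (g x) - u₂ x) (ENNReal.ofReal q) μ
        ≤ eLpNorm (fun x => D * ‖u₂ x‖) (ENNReal.ofReal q) μ :=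
      eLpNorm_mono_real fun x => by
        rw [hDdef]; exact AdjHelp2.conj_bound_big hn (u₂ x) (hgu x)
    have step3 : eLpNorm (fun x => D * ‖u₂ x‖) (ENNReal.ofReal q) μ
        = ENNReal.ofReal D * eLpNorm u₂ (ENNReal.ofReal q) μ := by
      rw [show (fun x : EuclideanSpace ℝ (Fin 3) => D * ‖u₂ x‖)
          = D • (fun x => ‖u₂ x‖) from rfl, eLpNorm_const_smul,
        Real.enorm_eq_ofReal hD.le, eLpNorm_norm]
    have step4 : ENNReal.ofReal D * eLpNorm u₂ (ENNReal.ofReal q) μ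
        < ENNReal.ofReal D * η :=
      ENNReal.mul_lt_mul_right ((ENNReal.ofReal_pos.mpr hD).ne')
        ENNReal.ofReal_ne_top hCsmall
    have step5 : ENNReal.ofReal D * η = ENNReal.ofReal (ε/2) := by
      rw [hηdef, ← ENNReal.ofReal_mul hD.le]
      congr 1
      field_simp
    exact lt_of_le_of_lt (step1.trans_eq step3) (step4.trans_eq step5)
  calc eLpNorm (fun x => (g x * u₁ x * star (g x) - u₁ x)
        + (g x * u₂ x * star (g x) - u₂ x)) (ENNReal.ofReal q) μ
      ≤ eLpNorm (fun x => g x * u₁ x * star (g x) - u₁ x) (ENNReal.ofReal q) μ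
        + eLpNorm (fun x => g x * u₂ x * star (g x) - u₂ x) (ENNReal.ofReal q) μ := htri
    _ < ENNReal.ofReal (ε/2) + ENNReal.ofReal (ε/2) := by
        exact lt_of_le_of_lt (add_le_add_left hP1 _)
          (ENNReal.add_lt_add_left ENNReal.ofReal_ne_top hP2)
    _ = ENNReal.ofReal ε := by
        rw [← ENNReal.ofReal_add (by positivity) (by positivity)]
        norm_num
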